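/- For large j one has ∫_{2^{-j-1} ≤ |z₁−x₁| ≤ 2^{-j+1}} 2^{j} |γ̈(x, x₁−z₁)| / (γ̇(x, x₁−z₁))² dz₁ ≲ 2^{b_j}, uniformly in x. -/

import Mathlib

open MeasureTheory Set Filter
open scoped ENNReal NNReal

noncomputable section

set_option maxHeartbeats 1000000 in
/-- Core estimate, positive-sign version: `φ > 0` on `(0, c₀]`. -/
lemma quasi_core_pos (c₀ κ : ℝ) (hc₀ : 0 < c₀) (hκ : 0 ≤ κ)
    (φ ψ aa EE : ℝ → ℝ)
    (hder : ∀ t ∈ Ioc (0:ℝ) c₀, HasDerivAt φ (ψ t) t)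
    (hQM : ∀ t ∈ Ioc (0:ℝ) c₀, ψ t = aa t + EE t)
    (hsign : (∀ t ∈ Ioc (0:ℝ) c₀, 0 ≤ aa t) ∨ (∀ t ∈ Ioc (0:ℝ) c₀, aa t ≤ 0))
    (hEE : ∀ t ∈ Ioc (0:ℝ) c₀, |EE t| ≤ κ * φ t)
    (hφ : ∀ t ∈ Ioc (0:ℝ) c₀, 0 < φ t)
    (α β t₀ m : ℝ) (ht₀ : 0 < t₀) (hta : t₀ ≤ α) (hab : α ≤ β) (hbc : β ≤ c₀)
    (hm : 0 < m) (hmt : m ≤ φ t₀) (hmc : m ≤ φ c₀) :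
    IntegrableOn (fun t => |ψ t| / (φ t)^2) (Icc α β) volume ∧
      ∫ t in Icc α β, |ψ t| / (φ t)^2 ≤ (2 + 2*κ*(β-α)) * Real.exp (κ*c₀) / m := by
  have ht₀c : t₀ ≤ c₀ := hta.trans (hab.trans hbc)
  have hsub : Icc α β ⊆ Ioc (0:ℝ) c₀ := fun t ht =>
    ⟨lt_of_lt_of_le (lt_of_lt_of_le ht₀ hta) ht.1, ht.2.trans hbc⟩
  have hsub2 : Icc t₀ c₀ ⊆ Ioc (0:ℝ) c₀ := fun t ht => ⟨lt_of_lt_of_le ht₀ ht.1, ht.2⟩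
  -- choose the sign σ of aa
  obtain ⟨σ, hσ1, hσa⟩ : ∃ σ : ℝ, (σ = 1 ∨ σ = -1) ∧ ∀ t ∈ Ioc (0:ℝ) c₀, 0 ≤ σ * aa t := by
    rcases hsign with h | h
    · exact ⟨1, Or.inl rfl, fun t ht => by simpa using h t ht⟩
    · exact ⟨-1, Or.inr rfl, fun t ht => by simpa using neg_nonneg.mpr (h t ht)⟩
  have hσsq : σ * σ = 1 := by rcases hσ1 with h | h <;> subst h <;> norm_num
  have hσabs : |σ| = 1 := by rcases hσ1 with h | h <;> subst h <;> norm_num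
  -- basic positivity fact
  have hkey2 : ∀ t ∈ Ioc (0:ℝ) c₀, 0 ≤ σ * ψ t + κ * φ t := by
    intro t ht
    have h1 := abs_le.mp (hEE t ht)
    have h2 := hσa t ht
    have h3 := hQM t ht
    rcases hσ1 with h | h <;> subst h <;> simp only [one_mul, neg_one_mul] at h2 ⊢ <;>
      nlinarith [h1.1, h1.2]
  -- the auxiliary monotone function
  set H : ℝ → ℝ := fun u => σ * (φ u * Real.exp (σ * κ * u)) with hHdef
  set H' : ℝ → ℝ := fun u => (σ * ψ u + κ * φ u) * Real.exp (σ * κ * u) with hH'def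
  have hH : ∀ t ∈ Ioc (0:ℝ) c₀, HasDerivAt H (H' t) t := by
    intro t ht
    have h1 : HasDerivAt (fun u : ℝ => Real.exp (σ * κ * u))
        (Real.exp (σ * κ * t) * (σ * κ * 1)) t :=
      ((hasDerivAt_id t).const_mul (σ * κ)).exp
    have h2 := ((hder t ht).mul h1).const_mul σ
    refine h2.congr_deriv (Eq.symm ?_)
    show (σ * ψ t + κ * φ t) * Real.exp (σ * κ * t) = _
    linear_combination (-(κ * φ t * Real.exp (σ * κ * t))) * hσsq
  have hH'0 : ∀ t ∈ Ioc (0:ℝ) c₀, 0 ≤ H' t :=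
    fun t ht => mul_nonneg (hkey2 t ht) (Real.exp_pos _).le
  have hmono : MonotoneOn H (Icc t₀ c₀) := by
    apply monotoneOn_of_hasDerivWithinAt_nonneg (f' := H') (convex_Icc t₀ c₀)
    · exact fun t ht => (hH t (hsub2 ht)).continuousAt.continuousWithinAt
    · intro t ht
      rw [interior_Icc] at ht
      exact (hH t (hsub2 (Ioo_subset_Icc_self ht))).hasDerivWithinAt
    · intro t ht
      rw [interior_Icc] at ht
      exact hH'0 t (hsub2 (Ioo_subset_Icc_self ht))
  set m' : ℝ := m * Real.exp (-(κ * c₀)) with hm'def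
  have hm' : 0 < m' := mul_pos hm (Real.exp_pos _)
  -- pointwise lower bound for φ on [α, β]
  have key : ∀ t ∈ Icc α β, m' ≤ φ t := by
    intro t ht
    have htI : t ∈ Icc t₀ c₀ := ⟨hta.trans ht.1, ht.2.trans hbc⟩
    have ht' := hsub ht
    rcases hσ1 with h | h <;> subst h
    · -- σ = 1, compare with t₀
      have hend : φ t₀ * Real.exp (1 * κ * t₀) ≤ φ t * Real.exp (1 * κ * t) := by
        have h1 := hmono ⟨le_refl t₀, ht₀c⟩ htI (hta.trans ht.1)
        simpa [hHdef] using h1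
      rw [one_mul] at hend
      have hmul : m' * Real.exp (κ * t) ≤ φ t * Real.exp (κ * t) := by
        calc m' * Real.exp (κ * t) = m * (Real.exp (-(κ * c₀)) * Real.exp (κ * t)) := by
              rw [hm'def]; ring
          _ = m * Real.exp (-(κ * c₀) + κ * t) := by rw [Real.exp_add]
          _ ≤ m * Real.exp (κ * t₀) := by
              apply mul_le_mul_of_nonneg_left _ hm.le
              apply Real.exp_le_exp.mpr
              have h1 : κ * t ≤ κ * c₀ := mul_le_mul_of_nonneg_left ht'.2 hκ
              have h2 : 0 ≤ κ * t₀ := mul_nonneg hκ ht₀.le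
              linarith
          _ ≤ φ t₀ * Real.exp (κ * t₀) := mul_le_mul_of_nonneg_right hmt (Real.exp_pos _).le
          _ ≤ φ t * Real.exp (κ * t) := hend
      exact le_of_mul_le_mul_right hmul (Real.exp_pos _)
    · -- σ = -1, compare with c₀
      have hend : φ c₀ * Real.exp (-(κ * c₀)) ≤ φ t * Real.exp (-(κ * t)) := by
        have h1 := hmono htI ⟨ht₀c, le_refl c₀⟩ (ht.2.trans hbc)
        simp only [hHdef, neg_one_mul, neg_mul, neg_le_neg_iff, Real.exp_neg] at h1
        simpa [Real.exp_neg] using h1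
      calc m' = m * Real.exp (-(κ * c₀)) := hm'def
        _ ≤ φ c₀ * Real.exp (-(κ * c₀)) := mul_le_mul_of_nonneg_right hmc (Real.exp_pos _).le
        _ ≤ φ t * Real.exp (-(κ * t)) := hend
        _ ≤ φ t * 1 := by
            apply mul_le_mul_of_nonneg_left _ (hφ t ht').le
            rw [Real.exp_le_one_iff]
            have : 0 ≤ κ * t := mul_nonneg hκ ht'.1.le
            linarith
        _ = φ t := mul_one _
  have hφcont : ContinuousOn φ (Icc α β) :=
    fun t ht => (hder t (hsub ht)).continuousAt.continuousWithinAt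
  have hne : ∀ t ∈ Icc α β, φ t ≠ 0 := fun t ht => (lt_of_lt_of_le hm' (key t ht)).ne'
  -- measurability of ψ on the interval
  have hψmeas : AEStronglyMeasurable ψ (volume.restrict (Ioc α β)) := by
    apply (measurable_deriv φ).aestronglyMeasurable.congr
    filter_upwards [ae_restrict_mem measurableSet_Ioc] with t ht
    exact (hder t (hsub (Ioc_subset_Icc_self ht))).deriv
  -- integrability of H' on (α, β]
  have hHint : IntegrableOn H' (Ioc α β) volume := by
    apply intervalIntegral.integrableOn_deriv_of_nonneg (g := H)
    · exact fun t ht => (hH t (hsub ht)).continuousAt.continuousWithinAt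
    · exact fun t ht => hH t (hsub (Ioo_subset_Icc_self ht))
    · exact fun t ht => hH'0 t (hsub (Ioo_subset_Icc_self ht))
  have hφint : IntegrableOn φ (Ioc α β) volume :=
    (hφcont.integrableOn_Icc).mono_set Ioc_subset_Icc_self
  -- integrability of ψ on (α, β]
  have hψint : IntegrableOn ψ (Ioc α β) volume := by
    apply Integrable.mono' ((hHint.abs.mul_const (Real.exp (κ * c₀))).add (hφint.const_mul κ))
      hψmeas
    filter_upwards [ae_restrict_mem measurableSet_Ioc] with t ht
    have ht' : t ∈ Ioc (0:ℝ) c₀ := hsub (Ioc_subset_Icc_self ht)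
    have hexp : Real.exp (σ * κ * t) * Real.exp (-(σ * κ * t)) = 1 := by
      rw [← Real.exp_add]; simp
    have h5 : σ * ψ t + κ * φ t = H' t * Real.exp (-(σ * κ * t)) := by
      simp only [hH'def]
      rw [mul_assoc, hexp, mul_one]
    have hexple : Real.exp (-(σ * κ * t)) ≤ Real.exp (κ * c₀) := by
      apply Real.exp_le_exp.mpr
      have h1 : κ * t ≤ κ * c₀ := mul_le_mul_of_nonneg_left ht'.2 hκ
      have h2 : 0 ≤ κ * t := mul_nonneg hκ ht'.1.le
      rcases hσ1 with h | h <;> subst h <;> simp only [one_mul, neg_one_mul, neg_neg] <;> linarith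
    have hψeq : ψ t = σ * (σ * ψ t + κ * φ t) - σ * (κ * φ t) := by
      linear_combination (-(ψ t)) * hσsq
    have hφt : 0 < φ t := hφ t ht'
    have habs : |ψ t| ≤ |H' t| * Real.exp (κ * c₀) + κ * φ t := by
      have h6 : |ψ t| ≤ |σ * ψ t + κ * φ t| + κ * φ t := by
        calc |ψ t| = |σ * (σ * ψ t + κ * φ t) - σ * (κ * φ t)| := congrArg abs hψeq
          _ ≤ |σ * (σ * ψ t + κ * φ t)| + |σ * (κ * φ t)| := abs_sub _ _
          _ = |σ * ψ t + κ * φ t| + |κ * φ t| := by rw [abs_mul, abs_mul, hσabs, one_mul, one_mul]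
          _ = |σ * ψ t + κ * φ t| + κ * φ t := by
              rw [abs_of_nonneg (mul_nonneg hκ hφt.le)]
      have h7 : |σ * ψ t + κ * φ t| = |H' t| * Real.exp (-(σ * κ * t)) := by
        rw [h5, abs_mul, abs_of_nonneg (Real.exp_pos _).le]
      have h8 : |H' t| * Real.exp (-(σ * κ * t)) ≤ |H' t| * Real.exp (κ * c₀) :=
        mul_le_mul_of_nonneg_left hexple (abs_nonneg _)
      calc |ψ t| ≤ |σ * ψ t + κ * φ t| + κ * φ t := h6
        _ = |H' t| * Real.exp (-(σ * κ * t)) + κ * φ t := by rw [h7]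
        _ ≤ |H' t| * Real.exp (κ * c₀) + κ * φ t := by linarith
    simpa [Real.norm_eq_abs] using habs
  -- integrability of ψ/φ² and |ψ|/φ² on (α, β]
  have hφmeas : AEStronglyMeasurable φ (volume.restrict (Ioc α β)) :=
    (hφcont.mono Ioc_subset_Icc_self).aestronglyMeasurable measurableSet_Ioc
  have hsqmeas : AEStronglyMeasurable (fun t => (φ t)^2) (volume.restrict (Ioc α β)) := by
    have h2 := hφmeas.mul hφmeas
    apply h2.congr
    filter_upwards with t
    simp only [Pi.mul_apply]
    ring
  have hquot_meas : AEStronglyMeasurable (fun t => ψ t / (φ t)^2)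
      (volume.restrict (Ioc α β)) :=
    (hψmeas.aemeasurable.div hsqmeas.aemeasurable).aestronglyMeasurable
  have hbound : ∀ t ∈ Ioc α β, |ψ t / (φ t)^2| ≤ |ψ t| * (m'^2)⁻¹ := by
    intro t ht
    have hk := key t (Ioc_subset_Icc_self ht)
    have hφt : 0 < φ t := lt_of_lt_of_le hm' hk
    have hsq : m'^2 ≤ (φ t)^2 := by nlinarith
    have hsqpos : 0 < (φ t)^2 := by positivity
    rw [abs_div, abs_of_nonneg hsqpos.le, div_le_iff₀ hsqpos]
    calc |ψ t| = |ψ t| * (m'^2)⁻¹ * m'^2 := by field_simp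
      _ ≤ |ψ t| * (m'^2)⁻¹ * (φ t)^2 := by
          apply mul_le_mul_of_nonneg_left hsq
          positivity
  have hquot_int : IntegrableOn (fun t => ψ t / (φ t)^2) (Ioc α β) volume := by
    apply Integrable.mono' (hψint.abs.mul_const ((m'^2)⁻¹)) hquot_meas
    filter_upwards [ae_restrict_mem measurableSet_Ioc] with t ht
    rw [Real.norm_eq_abs]
    exact hbound t ht
  have habs_int : IntegrableOn (fun t => |ψ t| / (φ t)^2) (Ioc α β) volume := by
    apply hquot_int.abs.congr
    filter_upwards with t
    rw [abs_div, abs_of_nonneg (sq_nonneg (φ t))]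
  have habs_int_Icc : IntegrableOn (fun t => |ψ t| / (φ t)^2) (Icc α β) volume :=
    (integrableOn_Icc_iff_integrableOn_Ioc enorm_ne_top).mpr habs_int
  refine ⟨habs_int_Icc, ?_⟩
  -- FTC
  have hFTC : ∫ t in α..β, ψ t / (φ t)^2 = (φ α)⁻¹ - (φ β)⁻¹ := by
    have hd : ∀ t ∈ uIcc α β, HasDerivAt (fun u => -(φ u)⁻¹) (ψ t / (φ t)^2) t := by
      intro t ht
      rw [uIcc_of_le hab] at ht
      have h1 := ((hder t (hsub ht)).inv (hne t ht)).neg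
      refine h1.congr_deriv ?_
      ring
    have hii : IntervalIntegrable (fun t => ψ t / (φ t)^2) volume α β :=
      (intervalIntegrable_iff_integrableOn_Ioc_of_le hab).mpr hquot_int
    rw [intervalIntegral.integral_eq_sub_of_hasDerivAt hd hii]
    ring
  have hXval : ∫ t in Icc α β, ψ t / (φ t)^2 = (φ α)⁻¹ - (φ β)⁻¹ := by
    rw [integral_Icc_eq_integral_Ioc, ← intervalIntegral.integral_of_le hab, hFTC]
  -- the comparison function R
  have hφinv_cont : ContinuousOn (fun t => (φ t)⁻¹) (Icc α β) := hφcont.inv₀ hne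
  have hquot_int_Icc : IntegrableOn (fun t => ψ t / (φ t)^2) (Icc α β) volume :=
    (integrableOn_Icc_iff_integrableOn_Ioc enorm_ne_top).mpr hquot_int
  have hR1 : IntegrableOn (fun t => σ * (ψ t / (φ t)^2)) (Icc α β) volume :=
    hquot_int_Icc.const_mul σ
  have hR2 : IntegrableOn (fun t => 2 * κ * (φ t)⁻¹) (Icc α β) volume :=
    (hφinv_cont.integrableOn_Icc).const_mul (2 * κ)
  have hstep1 : ∫ t in Icc α β, |ψ t| / (φ t)^2
      ≤ ∫ t in Icc α β, (σ * (ψ t / (φ t)^2) + 2 * κ * (φ t)⁻¹) := by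
    apply setIntegral_mono_on habs_int_Icc (hR1.add hR2) measurableSet_Icc
    intro t ht
    have ht' := hsub ht
    have hφt : 0 < φ t := hφ t ht'
    have h0 := hkey2 t ht'
    have hE1 := abs_le.mp (hEE t ht')
    have hQ := hQM t ht'
    have ha := hσa t ht'
    have h1 : |ψ t| ≤ σ * ψ t + 2 * κ * φ t := by
      apply abs_le.mpr
      constructor <;> rcases hσ1 with h | h <;> subst h <;>
        simp only [one_mul, neg_one_mul] at * <;> nlinarith
    have hsq : 0 < (φ t)^2 := by positivity
    calc |ψ t| / (φ t)^2 ≤ (σ * ψ t + 2 * κ * φ t) / (φ t)^2 :=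
          (div_le_div_iff_of_pos_right hsq).mpr h1
      _ = σ * (ψ t / (φ t)^2) + 2 * κ * (φ t)⁻¹ := by field_simp
  have hstep2 : ∫ t in Icc α β, (σ * (ψ t / (φ t)^2) + 2 * κ * (φ t)⁻¹)
      = (σ * ∫ t in Icc α β, ψ t / (φ t)^2) + 2 * κ * ∫ t in Icc α β, (φ t)⁻¹ := by
    rw [integral_add hR1 hR2, integral_const_mul, integral_const_mul]
  have hαmem : α ∈ Icc α β := ⟨le_refl _, hab⟩
  have hβmem : β ∈ Icc α β := ⟨hab, le_refl _⟩
  have hαinv : (φ α)⁻¹ ≤ m'⁻¹ := inv_anti₀ hm' (key α hαmem)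
  have hβinv : (φ β)⁻¹ ≤ m'⁻¹ := inv_anti₀ hm' (key β hβmem)
  have hαpos : 0 < φ α := hφ α (hsub hαmem)
  have hβpos : 0 < φ β := hφ β (hsub hβmem)
  have hstep3 : σ * ∫ t in Icc α β, ψ t / (φ t)^2 ≤ m'⁻¹ + m'⁻¹ := by
    rw [hXval]
    have h1 : (0:ℝ) ≤ (φ α)⁻¹ := by positivity
    have h2 : (0:ℝ) ≤ (φ β)⁻¹ := by positivity
    rcases hσ1 with h | h <;> subst h <;> simp only [one_mul, neg_one_mul] <;> linarith
  have hstep4 : ∫ t in Icc α β, (φ t)⁻¹ ≤ (β - α) * m'⁻¹ := by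
    calc ∫ t in Icc α β, (φ t)⁻¹ ≤ ∫ _t in Icc α β, m'⁻¹ := by
          apply setIntegral_mono_on hφinv_cont.integrableOn_Icc
            (integrableOn_const measure_Icc_lt_top.ne) measurableSet_Icc
          exact fun t ht => inv_anti₀ hm' (key t ht)
      _ = (β - α) * m'⁻¹ := by
          rw [setIntegral_const, Real.volume_real_Icc_of_le hab, smul_eq_mul]
  calc ∫ t in Icc α β, |ψ t| / (φ t)^2
      ≤ ∫ t in Icc α β, (σ * (ψ t / (φ t)^2) + 2 * κ * (φ t)⁻¹) := hstep1
    _ = (σ * ∫ t in Icc α β, ψ t / (φ t)^2) + 2 * κ * ∫ t in Icc α β, (φ t)⁻¹ := hstep2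
    _ ≤ (m'⁻¹ + m'⁻¹) + 2 * κ * ((β - α) * m'⁻¹) := by
        have h4 := mul_le_mul_of_nonneg_left hstep4 (by linarith : (0:ℝ) ≤ 2 * κ)
        linarith [hstep3]
    _ = (2 + 2*κ*(β-α)) * m'⁻¹ := by ring
    _ = (2 + 2*κ*(β-α)) * Real.exp (κ*c₀) / m := by
        rw [hm'def, mul_inv, Real.exp_neg, inv_inv, div_eq_mul_inv]
        ring

set_option maxHeartbeats 1000000 in
/-- Core estimate without the sign assumption on `φ` (only nonvanishing). -/
lemma quasi_core (c₀ κ : ℝ) (hc₀ : 0 < c₀) (hκ : 0 ≤ κ)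
    (φ ψ aa EE : ℝ → ℝ)
    (hder : ∀ t ∈ Ioc (0:ℝ) c₀, HasDerivAt φ (ψ t) t)
    (hQM : ∀ t ∈ Ioc (0:ℝ) c₀, ψ t = aa t + EE t)
    (hsign : (∀ t ∈ Ioc (0:ℝ) c₀, 0 ≤ aa t) ∨ (∀ t ∈ Ioc (0:ℝ) c₀, aa t ≤ 0))
    (hEE : ∀ t ∈ Ioc (0:ℝ) c₀, |EE t| ≤ κ * |φ t|)
    (hφ : ∀ t ∈ Ioc (0:ℝ) c₀, φ t ≠ 0)
    (α β t₀ m : ℝ) (ht₀ : 0 < t₀) (hta : t₀ ≤ α) (hab : α ≤ β) (hbc : β ≤ c₀)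
    (hm : 0 < m) (hmt : m ≤ |φ t₀|) (hmc : m ≤ |φ c₀|) :
    IntegrableOn (fun t => |ψ t| / (φ t)^2) (Icc α β) volume ∧
      ∫ t in Icc α β, |ψ t| / (φ t)^2 ≤ (2 + 2*κ*(β-α)) * Real.exp (κ*c₀) / m := by
  have hc₀mem : c₀ ∈ Ioc (0:ℝ) c₀ := ⟨hc₀, le_refl _⟩
  have ht₀mem : t₀ ∈ Ioc (0:ℝ) c₀ := ⟨ht₀, hta.trans (hab.trans hbc)⟩
  have hconst : (∀ t ∈ Ioc (0:ℝ) c₀, 0 < φ t) ∨ (∀ t ∈ Ioc (0:ℝ) c₀, φ t < 0) := by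
    rcases (hφ c₀ hc₀mem).lt_or_gt with h | h
    · right
      intro t ht
      by_contra hle
      push_neg at hle
      have hlt : 0 < φ t := lt_of_le_of_ne hle (Ne.symm (hφ t ht))
      have hCont : ContinuousOn φ (Icc t c₀) := fun s hs =>
        (hder s ⟨lt_of_lt_of_le ht.1 hs.1, hs.2⟩).continuousAt.continuousWithinAt
      obtain ⟨s, hs, hs0⟩ := intermediate_value_Icc' ht.2 hCont ⟨h.le, hlt.le⟩
      exact hφ s ⟨lt_of_lt_of_le ht.1 hs.1, hs.2⟩ hs0
    · left
      intro t ht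
      by_contra hle
      push_neg at hle
      have hlt : φ t < 0 := lt_of_le_of_ne hle (hφ t ht)
      have hCont : ContinuousOn φ (Icc t c₀) := fun s hs =>
        (hder s ⟨lt_of_lt_of_le ht.1 hs.1, hs.2⟩).continuousAt.continuousWithinAt
      obtain ⟨s, hs, hs0⟩ := intermediate_value_Icc ht.2 hCont ⟨hlt.le, h.le⟩
      exact hφ s ⟨lt_of_lt_of_le ht.1 hs.1, hs.2⟩ hs0
  rcases hconst with hpos | hneg
  · refine quasi_core_pos c₀ κ hc₀ hκ φ ψ aa EE hder hQM hsign
      (fun t ht => by rw [← abs_of_pos (hpos t ht)]; exact hEE t ht) hpos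
      α β t₀ m ht₀ hta hab hbc hm ?_ ?_
    · rwa [abs_of_pos (hpos t₀ ht₀mem)] at hmt
    · rwa [abs_of_pos (hpos c₀ hc₀mem)] at hmc
  · have h := quasi_core_pos c₀ κ hc₀ hκ (fun t => -φ t) (fun t => -ψ t)
      (fun t => -aa t) (fun t => -EE t)
      (fun t ht => (hder t ht).neg)
      (fun t ht => by
        show -ψ t = -aa t + -EE t
        rw [hQM t ht]; ring)
      (by
        rcases hsign with h | h
        · exact Or.inr fun t ht => neg_nonpos.mpr (h t ht)
        · exact Or.inl fun t ht => neg_nonneg.mpr (h t ht))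
      (fun t ht => by
        show |(-EE t)| ≤ κ * -φ t
        rw [abs_neg]
        calc |EE t| ≤ κ * |φ t| := hEE t ht
          _ = κ * -φ t := by rw [abs_of_neg (hneg t ht)])
      (fun t ht => neg_pos.mpr (hneg t ht))
      α β t₀ m ht₀ hta hab hbc hm
      (by rwa [abs_of_neg (hneg t₀ ht₀mem)] at hmt)
      (by rwa [abs_of_neg (hneg c₀ hc₀mem)] at hmc)
    have heq : (fun t => |(-ψ t)| / ((-φ t))^2) = (fun t => |ψ t| / (φ t)^2) := by
      funext t
      rw [abs_neg, neg_sq]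
    rw [heq] at h
    exact h

set_option maxHeartbeats 1000000 in
theorem sublemma_part_ii
    (c₀ A C₀ κ : ℝ) (hc₀ : 0 < c₀) (hA : 1 ≤ A) (hC₀ : 1 ≤ C₀) (hκ : 0 ≤ κ)
    (g : ℝ → ℝ)
    (hgcont : ContinuousOn g (Ici 0)) (hg0 : g 0 = 0)
    (hgpos : ∀ t, 0 < t → 0 < g t)
    (hgdbl : ∀ t₁ t₂, 0 ≤ t₁ → A * t₁ ≤ t₂ → 2 * g t₁ ≤ g t₂)
    (γ γd γdd : ℝ × ℝ → ℝ → ℝ)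
    (hγd : ∀ x t, |t| ≤ c₀ → HasDerivAt (γ x) (γd x t) t)
    (hγdd : ∀ x t, |t| ≤ c₀ → HasDerivAt (γd x) (γdd x t) t)
    (a E : ℝ × ℝ → ℝ → ℝ)
    (hQM : ∀ x t, |t| ≤ c₀ → γdd x t = a x t + E x t)
    (hsignpos : ∀ x, (∀ t ∈ Ioc (0:ℝ) c₀, 0 ≤ a x t) ∨ (∀ t ∈ Ioc (0:ℝ) c₀, a x t ≤ 0))
    (hsignneg : ∀ x, (∀ t ∈ Ico (-c₀) (0:ℝ), 0 ≤ a x t) ∨ (∀ t ∈ Ico (-c₀) (0:ℝ), a x t ≤ 0))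
    (hE : ∀ x t, |t| ≤ c₀ → |E x t| ≤ κ * |γd x t|)
    (hdbl : ∀ x t, |t| ≤ c₀ →
      C₀⁻¹ * g (A⁻¹ * |t|) ≤ |γd x t| ∧ |γd x t| ≤ C₀ * g (A * |t|))
    (B : ℝ) (hB : B = 2 ^ 20 * A)
    (bj : ℤ → ℤ)
    (hbj : ∀ j : ℤ, (2:ℝ) ^ (-(bj j) - 1) < (2:ℝ) ^ (-j) * g ((2:ℝ) ^ (5 - j) * B⁻¹) ∧
      (2:ℝ) ^ (-j) * g ((2:ℝ) ^ (5 - j) * B⁻¹) ≤ (2:ℝ) ^ (-(bj j))) :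
    ∃ C : ℝ, 0 < C ∧ ∃ J : ℤ, ∀ j : ℤ, J ≤ j → ∀ x : ℝ × ℝ,
      (∫ z₁ in {z₁ : ℝ | (2:ℝ) ^ (-j - 1) ≤ |z₁ - x.1| ∧ |z₁ - x.1| ≤ (2:ℝ) ^ (-j + 1)},
        (2:ℝ) ^ j * |γdd x (x.1 - z₁)| / (γd x (x.1 - z₁)) ^ 2) ≤ C * (2:ℝ) ^ (bj j) := by
  have hA0 : (0:ℝ) < A := lt_of_lt_of_le one_pos hA
  have hC₀0 : (0:ℝ) < C₀ := lt_of_lt_of_le one_pos hC₀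
  refine ⟨4 * (2 + 2 * κ * c₀) * Real.exp (κ * c₀) * C₀, by positivity, ?_⟩
  -- choose J
  obtain ⟨n, hn⟩ : ∃ n : ℕ, (2 + A) / c₀ < 2 ^ n := pow_unbounded_of_one_lt _ one_lt_two
  refine ⟨(n : ℤ), ?_⟩
  intro j hj x
  set α : ℝ := (2:ℝ) ^ (-j - 1) with hαdef
  set β : ℝ := (2:ℝ) ^ (-j + 1) with hβdef
  set t₀ : ℝ := (2:ℝ) ^ (-j - 15) with ht₀def
  have h2pos : (0:ℝ) < 2 := two_pos
  have hα0 : 0 < α := zpow_pos h2pos _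
  have hβ0 : 0 < β := zpow_pos h2pos _
  have ht₀0 : 0 < t₀ := zpow_pos h2pos _
  have ht₀α : t₀ ≤ α := zpow_le_zpow_right₀ one_le_two (by omega)
  have hαβ : α ≤ β := zpow_le_zpow_right₀ one_le_two (by omega)
  have h2n : (0:ℝ) < (2:ℝ) ^ n := by positivity
  have hcA : 2 + A < c₀ * 2 ^ n := by
    rwa [div_lt_iff₀ hc₀, mul_comm] at hn
  have hmono2 : ∀ k l : ℤ, k ≤ l → (2:ℝ) ^ k ≤ (2:ℝ) ^ l :=
    fun k l h => zpow_le_zpow_right₀ one_le_two h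
  have hβc₀ : β ≤ c₀ := by
    have h1 : β ≤ (2:ℝ) ^ (-(n:ℤ) + 1) := hmono2 _ _ (by omega)
    have h2 : (2:ℝ) ^ (-(n:ℤ) + 1) = 2 * ((2:ℝ) ^ n)⁻¹ := by
      rw [zpow_add₀ (two_ne_zero), zpow_neg, zpow_natCast, zpow_one]
      ring
    have h3 : 2 * ((2:ℝ) ^ n)⁻¹ ≤ c₀ := by
      rw [mul_inv_le_iff₀ h2n]
      nlinarith
    linarith [h1, h2 ▸ h1]
  have hAt₀ : A * t₀ ≤ c₀ := by
    have h1 : t₀ ≤ (2:ℝ) ^ (-(n:ℤ)) := hmono2 _ _ (by omega)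
    have h2 : (2:ℝ) ^ (-(n:ℤ)) = ((2:ℝ) ^ n)⁻¹ := by rw [zpow_neg, zpow_natCast]
    have h3 : A * ((2:ℝ) ^ n)⁻¹ ≤ c₀ := by
      rw [mul_inv_le_iff₀ h2n]
      nlinarith
    calc A * t₀ ≤ A * ((2:ℝ) ^ n)⁻¹ := by
          apply mul_le_mul_of_nonneg_left _ hA0.le
          rw [← h2]; exact h1
      _ ≤ c₀ := h3
  -- the key identity for arguments of g
  have hBpos : (0:ℝ) < B := by rw [hB]; positivity
  have harg : A⁻¹ * t₀ = (2:ℝ) ^ (5 - j) * B⁻¹ := by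
    rw [hB, mul_inv, ht₀def]
    have h20 : ((2:ℝ) ^ (20:ℕ)) = (2:ℝ) ^ ((20:ℤ)) := (zpow_natCast 2 20).symm
    rw [h20]
    rw [← zpow_neg, ← mul_assoc, ← zpow_add₀ (two_ne_zero : (2:ℝ) ≠ 0)]
    have : (5 - j) + -20 = -j - 15 := by ring
    rw [this]
    ring
  have hgval : 0 < g (A⁻¹ * t₀) := hgpos _ (by positivity)
  set m : ℝ := C₀⁻¹ * g (A⁻¹ * t₀) with hmdef
  have hm : 0 < m := by positivity
  have habs_mem : ∀ t ∈ Ioc (0:ℝ) c₀, |t| ≤ c₀ := fun t ht => by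
    rw [abs_of_pos ht.1]; exact ht.2
  have habs_mem' : ∀ t ∈ Ioc (0:ℝ) c₀, |(-t)| ≤ c₀ := fun t ht => by
    rw [abs_neg, abs_of_pos ht.1]; exact ht.2
  have ht₀le : t₀ ≤ c₀ := ht₀α.trans (hαβ.trans hβc₀)
  -- lower bounds at t₀ and c₀ (both signs)
  have hgmono : g (A⁻¹ * t₀) ≤ g (A⁻¹ * c₀) := by
    have h1 : A * (A⁻¹ * t₀) ≤ A⁻¹ * c₀ := by
      rw [← mul_assoc, mul_inv_cancel₀ hA0.ne', one_mul]
      calc t₀ = A⁻¹ * (A * t₀) := by field_simp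
        _ ≤ A⁻¹ * c₀ := by
            apply mul_le_mul_of_nonneg_left hAt₀
            positivity
    have h2 := hgdbl (A⁻¹ * t₀) (A⁻¹ * c₀) (by positivity) h1
    linarith [hgval]
  have hmt : ∀ s : ℝ, |s| = t₀ → m ≤ |γd x s| := by
    intro s hs
    have h := (hdbl x s (hs.le.trans ht₀le)).1
    rwa [hs] at h
  have hmc : ∀ s : ℝ, |s| = c₀ → m ≤ |γd x s| := by
    intro s hs
    have h := (hdbl x s hs.le).1
    rw [hs] at h
    calc m = C₀⁻¹ * g (A⁻¹ * t₀) := hmdef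
      _ ≤ C₀⁻¹ * g (A⁻¹ * c₀) := by
          apply mul_le_mul_of_nonneg_left hgmono
          positivity
      _ ≤ |γd x s| := h
  have hφne : ∀ t ∈ Ioc (0:ℝ) c₀, γd x t ≠ 0 := by
    intro t ht
    have h := (hdbl x t (habs_mem t ht)).1
    have hg1 : 0 < g (A⁻¹ * |t|) := hgpos _ (by
      rw [abs_of_pos ht.1]
      exact mul_pos (inv_pos.mpr hA0) ht.1)
    have : 0 < |γd x t| := lt_of_lt_of_le (mul_pos (inv_pos.mpr hC₀0) hg1) h
    exact abs_pos.mp this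
  have hφne' : ∀ t ∈ Ioc (0:ℝ) c₀, γd x (-t) ≠ 0 := by
    intro t ht
    have h := (hdbl x (-t) (habs_mem' t ht)).1
    have hg1 : 0 < g (A⁻¹ * |(-t)|) := hgpos _ (by
      rw [abs_neg, abs_of_pos ht.1]
      exact mul_pos (inv_pos.mpr hA0) ht.1)
    have : 0 < |γd x (-t)| := lt_of_lt_of_le (mul_pos (inv_pos.mpr hC₀0) hg1) h
    exact abs_pos.mp this
  -- positive side
  obtain ⟨hintp, hboundp⟩ := quasi_core c₀ κ hc₀ hκ
    (fun t => γd x t) (fun t => γdd x t) (a x) (E x)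
    (fun t ht => hγdd x t (habs_mem t ht))
    (fun t ht => hQM x t (habs_mem t ht))
    (hsignpos x)
    (fun t ht => hE x t (habs_mem t ht))
    hφne α β t₀ m ht₀0 ht₀α hαβ hβc₀ hm
    (hmt t₀ (abs_of_pos ht₀0)) (hmc c₀ (abs_of_pos hc₀))
  -- negative side
  obtain ⟨hintm, hboundm⟩ := quasi_core c₀ κ hc₀ hκ
    (fun t => γd x (-t)) (fun t => -γdd x (-t)) (fun t => -(a x (-t))) (fun t => -(E x (-t)))
    (fun t ht => by
      have h := hγdd x (-t) (habs_mem' t ht)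
      have h2 := HasDerivAt.comp t h (hasDerivAt_neg t)
      exact h2.congr_deriv (by ring))
    (fun t ht => by
      show -γdd x (-t) = -(a x (-t)) + -(E x (-t))
      rw [hQM x (-t) (habs_mem' t ht)]
      ring)
    (by
      rcases hsignneg x with h | h
      · exact Or.inr fun t ht => neg_nonpos.mpr (h (-t) ⟨by linarith [ht.2], by linarith [ht.1]⟩)
      · exact Or.inl fun t ht => neg_nonneg.mpr (h (-t) ⟨by linarith [ht.2], by linarith [ht.1]⟩))
    (fun t ht => by
      rw [abs_neg]
      exact hE x (-t) (habs_mem' t ht))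
    hφne' α β t₀ m ht₀0 ht₀α hαβ hβc₀ hm
    (hmt (-t₀) (by rw [abs_neg]; exact abs_of_pos ht₀0))
    (hmc (-c₀) (by rw [abs_neg]; exact abs_of_pos hc₀))
  -- clean up the negative-side integrand
  have hnegeq : (fun t : ℝ => |(-γdd x (-t))| / (γd x (-t))^2)
      = (fun t : ℝ => |γdd x (-t)| / (γd x (-t))^2) := by
    funext t
    rw [abs_neg]
  rw [hnegeq] at hintm hboundm
  -- change of variables for the set integral
  set G : ℝ → ℝ := fun t => (2:ℝ) ^ j * |γdd x t| / (γd x t) ^ 2 with hGdef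
  set T : Set ℝ := Icc (-β) (-α) ∪ Icc α β with hTdef
  have hSpre : {z₁ : ℝ | (2:ℝ) ^ (-j - 1) ≤ |z₁ - x.1| ∧ |z₁ - x.1| ≤ (2:ℝ) ^ (-j + 1)}
      = (fun z => x.1 - z) ⁻¹' T := by
    ext z
    simp only [mem_setOf_eq, mem_preimage, hTdef, mem_union, mem_Icc, ← hαdef, ← hβdef]
    constructor
    · rintro ⟨h1, h2⟩
      rw [abs_sub_comm] at h1 h2
      rcases le_total 0 (x.1 - z) with h | h
      · rw [abs_of_nonneg h] at h1 h2
        exact Or.inr ⟨h1, h2⟩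
      · rw [abs_of_nonpos h] at h1 h2
        exact Or.inl ⟨by linarith, by linarith⟩
    · rintro (⟨h1, h2⟩ | ⟨h1, h2⟩)
      · rw [abs_sub_comm, abs_of_nonpos (by linarith)]
        exact ⟨by linarith, by linarith⟩
      · rw [abs_sub_comm, abs_of_nonneg (by linarith)]
        exact ⟨h1, h2⟩
  have hsubleft := Measure.measurePreserving_sub_left (volume : Measure ℝ) x.1
  have hembleft : MeasurableEmbedding (fun z : ℝ => x.1 - z) :=
    (MeasurableEquiv.subLeft x.1).measurableEmbedding
  have hCoV : ∫ z₁ in {z₁ : ℝ | (2:ℝ) ^ (-j - 1) ≤ |z₁ - x.1| ∧ |z₁ - x.1| ≤ (2:ℝ) ^ (-j + 1)},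
      (2:ℝ) ^ j * |γdd x (x.1 - z₁)| / (γd x (x.1 - z₁)) ^ 2
      = ∫ t in T, G t := by
    rw [hSpre]
    exact hsubleft.setIntegral_preimage_emb hembleft G T
  -- neg reflection for the left piece
  have hnegmp := Measure.measurePreserving_neg (volume : Measure ℝ)
  have hnegemb : MeasurableEmbedding (fun t : ℝ => -t) :=
    (Homeomorph.neg ℝ).measurableEmbedding
  have hnegpre : (fun t : ℝ => -t) ⁻¹' (Icc (-β) (-α)) = Icc α β := by
    ext t
    simp only [mem_preimage, mem_Icc]
    constructor <;> intro h <;> constructor <;> linarith [h.1, h.2]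
  have hIntLeft : IntegrableOn G (Icc (-β) (-α)) volume := by
    rw [← hnegmp.integrableOn_comp_preimage hnegemb, hnegpre]
    have : (G ∘ fun t : ℝ => -t) = fun t => (2:ℝ) ^ j * (|γdd x (-t)| / (γd x (-t)) ^ 2) := by
      funext t
      simp only [Function.comp_apply, hGdef, mul_div_assoc]
    rw [this]
    exact hintm.const_mul _
  have hIntRight : IntegrableOn G (Icc α β) volume := by
    have : G = fun t => (2:ℝ) ^ j * (|γdd x t| / (γd x t) ^ 2) := by
      funext t
      simp only [hGdef, mul_div_assoc]
    rw [this]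
    exact hintp.const_mul _
  have hdisj : Disjoint (Icc (-β) (-α)) (Icc α β) := by
    apply Set.disjoint_left.mpr
    intro t ht1 ht2
    have := ht1.2
    have := ht2.1
    linarith
  have hsplit : ∫ t in T, G t = (∫ t in Icc (-β) (-α), G t) + ∫ t in Icc α β, G t := by
    rw [hTdef]
    exact setIntegral_union hdisj measurableSet_Icc hIntLeft hIntRight
  have hleft : ∫ t in Icc (-β) (-α), G t = ∫ t in Icc α β, G (-t) := by
    rw [← hnegmp.setIntegral_preimage_emb hnegemb G (Icc (-β) (-α)), hnegpre]
  -- bound each piece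
  have h2j : (0:ℝ) < (2:ℝ) ^ j := zpow_pos h2pos _
  set Kc : ℝ := (2 + 2 * κ * c₀) * Real.exp (κ * c₀) with hKcdef
  have hKc0 : 0 < Kc := by positivity
  have hKle : (2 + 2*κ*(β-α)) * Real.exp (κ*c₀) / m ≤ Kc * m⁻¹ := by
    rw [hKcdef, ← div_eq_mul_inv]
    have h1 : (2 + 2*κ*(β-α)) ≤ 2 + 2*κ*c₀ := by nlinarith [hα0, hβc₀, hκ]
    have h2 : (2 + 2*κ*(β-α)) * Real.exp (κ*c₀) ≤ (2 + 2*κ*c₀) * Real.exp (κ*c₀) :=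
      mul_le_mul_of_nonneg_right h1 (Real.exp_pos _).le
    exact (div_le_div_iff_of_pos_right hm).mpr h2
  have hGsplit : G = fun t => (2:ℝ) ^ j * (|γdd x t| / (γd x t) ^ 2) := by
    funext t
    simp only [hGdef, mul_div_assoc]
  have hpp : ∫ t in Icc α β, G t ≤ (2:ℝ)^j * (Kc * m⁻¹) := by
    rw [hGsplit, integral_const_mul]
    exact mul_le_mul_of_nonneg_left (hboundp.trans hKle) h2j.le
  have hpm : ∫ t in Icc α β, G (-t) ≤ (2:ℝ)^j * (Kc * m⁻¹) := by
    have : (fun t => G (-t)) = fun t => (2:ℝ)^j * (|γdd x (-t)| / (γd x (-t)) ^ 2) := by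
      funext t
      simp only [hGdef, mul_div_assoc]
    rw [this, integral_const_mul]
    exact mul_le_mul_of_nonneg_left (hboundm.trans hKle) h2j.le
  -- the `2^j / g` bound from the definition of `b_j`
  have hb1 := (hbj j).1
  rw [← harg] at hb1
  have hlt : (2:ℝ)^j < 2^(bj j + 1) * g (A⁻¹ * t₀) := by
    have h := mul_lt_mul_of_pos_right hb1 (zpow_pos h2pos (j + bj j + 1))
    calc (2:ℝ)^j = (2:ℝ)^(-(bj j) - 1) * 2^(j + bj j + 1) := by
          rw [← zpow_add₀ (two_ne_zero : (2:ℝ) ≠ 0)]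
          congr 1
          ring
      _ < ((2:ℝ)^(-j) * g (A⁻¹ * t₀)) * 2^(j + bj j + 1) := h
      _ = ((2:ℝ)^(-j) * 2^(j + bj j + 1)) * g (A⁻¹ * t₀) := by ring
      _ = (2:ℝ)^(bj j + 1) * g (A⁻¹ * t₀) := by
          rw [← zpow_add₀ (two_ne_zero : (2:ℝ) ≠ 0)]
          congr 2
          ring
  have hm_inv : m⁻¹ = C₀ * (g (A⁻¹ * t₀))⁻¹ := by rw [hmdef, mul_inv, inv_inv]
  have h2jm : (2:ℝ)^j * m⁻¹ ≤ C₀ * (2:ℝ)^(bj j + 1) := by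
    rw [hm_inv]
    have h3 : (2:ℝ)^j * (g (A⁻¹ * t₀))⁻¹ ≤ (2:ℝ)^(bj j + 1) :=
      (mul_inv_le_iff₀ hgval).mpr hlt.le
    calc (2:ℝ)^j * (C₀ * (g (A⁻¹ * t₀))⁻¹) = C₀ * ((2:ℝ)^j * (g (A⁻¹ * t₀))⁻¹) := by ring
      _ ≤ C₀ * (2:ℝ)^(bj j + 1) := mul_le_mul_of_nonneg_left h3 hC₀0.le
  calc (∫ z₁ in {z₁ : ℝ | α ≤ |z₁ - x.1| ∧ |z₁ - x.1| ≤ β},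
        (2:ℝ) ^ j * |γdd x (x.1 - z₁)| / (γd x (x.1 - z₁)) ^ 2)
      = ∫ t in T, G t := hCoV
    _ = (∫ t in Icc (-β) (-α), G t) + ∫ t in Icc α β, G t := hsplit
    _ = (∫ t in Icc α β, G (-t)) + ∫ t in Icc α β, G t := by rw [hleft]
    _ ≤ (2:ℝ)^j * (Kc * m⁻¹) + (2:ℝ)^j * (Kc * m⁻¹) := add_le_add hpm hpp
    _ = 2 * Kc * ((2:ℝ)^j * m⁻¹) := by ring
    _ ≤ 2 * Kc * (C₀ * (2:ℝ)^(bj j + 1)) := by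
        apply mul_le_mul_of_nonneg_left h2jm
        positivity
    _ = 4 * (2 + 2 * κ * c₀) * Real.exp (κ * c₀) * C₀ * (2:ℝ)^(bj j) := by
        rw [zpow_add₀ (two_ne_zero : (2:ℝ) ≠ 0), zpow_one, hKcdef]
        ring
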